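/- The numbers a(n,k) = #{π ∈ AS_{n+1} : des(π) = k} satisfy the recurrence a(n+1,k) = k·a(n,k) + (n−k+2)·a(n,k−1) for n ≥ 1 and k ≥ 1, with a(1,1) = 1 and a(1,k) = 0 for k ≥ 2. -/

import Mathlib

open scoped Classical

/-- The word `π(1)π(2)⋯π(n)` of a permutation of `[n]`, with values in `{1,…,n}`. -/
def permWord {n : ℕ} (π : Equiv.Perm (Fin n)) : List ℕ :=
  List.ofFn fun i => (π i : ℕ) + 1

/-- The restriction of a word to `[k]`: the subword of entries `≤ k`. -/
def restrict (w : List ℕ) (k : ℕ) : List ℕ := w.filter (fun x => x ≤ k)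

/-- A succession of a word: an index `i` with `w(i+1) = w(i) + 1`. -/
def hasSuccession (w : List ℕ) : Prop :=
  ∃ i, i + 1 < w.length ∧ w.getD (i + 1) 0 = w.getD i 0 + 1

/-- The number of descents of a word. -/
def desList (w : List ℕ) : ℕ :=
  (List.range (w.length - 1)).countP fun i =>
    decide (w.getD (i + 1) 0 < w.getD i 0)

/-- `AS_n`: permutations all of whose restrictions to `[k]` have no successions
(permutations avoiding simsun successions). -/
def InAS {n : ℕ} (π : Equiv.Perm (Fin n)) : Prop :=
  ∀ k, ¬ hasSuccession (restrict (permWord π) k)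

namespace Stmt7Aux

open List

/-! ### Basic facts about `hasSuccession` and `desList` -/

lemma not_hasSucc_nil : ¬ hasSuccession ([] : List ℕ) := by
  rintro ⟨i, hi, -⟩; simp at hi

lemma not_hasSucc_single (a : ℕ) : ¬ hasSuccession [a] := by
  rintro ⟨i, hi, -⟩; simp at hi

lemma hasSucc_cons_cons (a b : ℕ) (t : List ℕ) :
    hasSuccession (a :: b :: t) ↔ b = a + 1 ∨ hasSuccession (b :: t) := by
  constructor
  · rintro ⟨i, hi, he⟩
    cases i with
    | zero => left; simpa using he
    | succ i =>
      right
      exact ⟨i, by simpa using hi, by simpa using he⟩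
  · rintro (h | ⟨i, hi, he⟩)
    · exact ⟨0, by simp, by simpa using h⟩
    · exact ⟨i + 1, by simpa using hi, by simpa using he⟩

lemma not_hasSucc_tail (a : ℕ) (l : List ℕ) (h : ¬ hasSuccession (a :: l)) :
    ¬ hasSuccession l := by
  cases l with
  | nil => exact not_hasSucc_nil
  | cons b t => exact fun hs => h ((hasSucc_cons_cons a b t).2 (Or.inr hs))

lemma des_nil : desList ([] : List ℕ) = 0 := rfl

lemma des_single (a : ℕ) : desList [a] = 0 := rfl

lemma des_cons_cons (a b : ℕ) (t : List ℕ) :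
    desList (a :: b :: t) = (if b < a then 1 else 0) + desList (b :: t) := by
  unfold desList
  have h1 : (a :: b :: t).length - 1 = t.length + 1 := rfl
  have h2 : (b :: t).length - 1 = t.length := rfl
  rw [h1, h2, List.range_succ_eq_map, List.countP_cons, List.countP_map]
  have h3 : List.countP
      ((fun i => decide ((a :: b :: t).getD (i + 1) 0 < (a :: b :: t).getD i 0)) ∘ Nat.succ)
      (List.range t.length)
      = List.countP (fun i => decide ((b :: t).getD (i + 1) 0 < (b :: t).getD i 0))
        (List.range t.length) := by
    apply List.countP_congr
    intro x _
    simp only [Function.comp_apply, Nat.succ_eq_add_one, List.getD_cons_succ]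
  rw [h3]
  by_cases hba : b < a
  · simp [hba]; omega
  · simp [hba]

lemma des_le (w : List ℕ) : desList w ≤ w.length - 1 := by
  calc desList w ≤ (List.range (w.length - 1)).length := List.countP_le_length
  _ = w.length - 1 := List.length_range

/-! ### Splitting lemmas -/

lemma des_append_cons (l₁ : List ℕ) (x : ℕ) (l₂ : List ℕ) :
    desList (l₁ ++ x :: l₂) = desList (l₁ ++ [x]) + desList (x :: l₂) := by
  induction l₁ with
  | nil => simp [des_single]
  | cons a t ih =>
    cases t with
    | nil =>
      simp only [List.cons_append, List.nil_append, List.singleton_append]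
      rw [des_cons_cons a x l₂, des_cons_cons a x []]
      simp [des_single]
    | cons c t' =>
      simp only [List.cons_append] at *
      rw [des_cons_cons a c (t' ++ x :: l₂), des_cons_cons a c (t' ++ [x]), ih]
      omega

lemma hasSucc_append_cons (l₁ : List ℕ) (x : ℕ) (l₂ : List ℕ) :
    hasSuccession (l₁ ++ x :: l₂) ↔ hasSuccession (l₁ ++ [x]) ∨ hasSuccession (x :: l₂) := by
  induction l₁ with
  | nil =>
    simp only [List.nil_append]
    have := not_hasSucc_single x
    tauto
  | cons a t ih =>
    cases t with
    | nil =>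
      simp only [List.cons_append, List.nil_append, List.singleton_append]
      rw [hasSucc_cons_cons a x l₂, hasSucc_cons_cons a x []]
      have := not_hasSucc_single x
      tauto
    | cons c t' =>
      simp only [List.cons_append] at *
      rw [hasSucc_cons_cons a c (t' ++ x :: l₂), hasSucc_cons_cons a c (t' ++ [x]), ih]
      tauto

lemma des_append_max (l : List ℕ) (M : ℕ) (hM : ∀ y ∈ l, y < M) :
    desList (l ++ [M]) = desList l := by
  induction l with
  | nil => simp [des_single, des_nil]
  | cons a t ih =>
    cases t with
    | nil =>
      simp only [List.cons_append, List.nil_append]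
      rw [des_cons_cons a M []]
      have : ¬ M < a := Nat.not_lt.2 (le_of_lt (hM a (by simp)))
      simp [this, des_single, des_nil]
    | cons c t' =>
      simp only [List.cons_append] at *
      rw [des_cons_cons a c (t' ++ [M]), des_cons_cons a c t',
        ih (fun y hy => hM y (List.mem_cons_of_mem a hy))]

lemma not_hasSucc_cons_max (l : List ℕ) (M : ℕ) (hM : ∀ y ∈ l, y < M)
    (hl : ¬ hasSuccession l) : ¬ hasSuccession (M :: l) := by
  cases l with
  | nil => exact not_hasSucc_single M
  | cons b t =>
    rw [hasSucc_cons_cons]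
    rintro (h | h)
    · have := hM b (by simp); omega
    · exact hl h

lemma hasSucc_insert_iff (l₁ l₂ : List ℕ) (M : ℕ)
    (hM : ∀ y ∈ l₁ ++ l₂, y < M) (hv : ¬ hasSuccession (l₁ ++ l₂)) :
    hasSuccession (l₁ ++ M :: l₂) ↔ l₁.getLast? = some (M - 1) := by
  induction l₁ with
  | nil =>
    simp only [List.nil_append] at *
    constructor
    · intro h
      exact absurd h (not_hasSucc_cons_max l₂ M hM hv)
    · intro h; simp at h
  | cons a t ih =>
    cases t with
    | nil =>
      simp only [List.cons_append, List.nil_append] at *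
      rw [hasSucc_cons_cons a M l₂]
      have haM : a < M := hM a (by simp)
      have h2 : ¬ hasSuccession (M :: l₂) :=
        not_hasSucc_cons_max l₂ M (fun y hy => hM y (by simp [hy]))
          (not_hasSucc_tail a l₂ hv)
      constructor
      · rintro (h | h)
        · simp; omega
        · exact absurd h h2
      · intro h; simp at h; left; omega
    | cons c t' =>
      simp only [List.cons_append] at *
      rw [hasSucc_cons_cons a c (t' ++ M :: l₂), List.getLast?_cons_cons]
      have hca : ¬ c = a + 1 := by
        intro h
        exact hv ((hasSucc_cons_cons a c (t' ++ l₂)).2 (Or.inl h))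
      rw [ih (fun y hy => hM y (by simp at *; tauto)) (not_hasSucc_tail _ _ hv)]
      tauto

/-! ### Permutation words -/

/-- `NoSucc w`: no restriction of `w` has a succession. -/
def NoSucc (w : List ℕ) : Prop := ∀ c, ¬ hasSuccession (restrict w c)

lemma permWord_injective {m : ℕ} : Function.Injective (permWord (n := m)) := by
  intro π σ h
  unfold permWord at h
  rw [List.ofFn_inj] at h
  ext i
  have := congrFun h i
  simpa using congrArg (fun x => x) this

/-- The set of words of permutations of `[m]`. -/
noncomputable def PW (m : ℕ) : Finset (List ℕ) :=
  Finset.image permWord (Finset.univ : Finset (Equiv.Perm (Fin m)))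

lemma permWord_perm {m : ℕ} (π : Equiv.Perm (Fin m)) :
    (permWord π).Perm (List.range' 1 m) := by
  have h1 : permWord π = List.map (fun i : Fin m => (i : ℕ) + 1)
      (List.map π (List.finRange m)) := by
    unfold permWord
    rw [List.ofFn_eq_map, List.map_map]
    rfl
  have h2 : (List.map π (List.finRange m)).Perm (List.finRange m) := by
    apply List.perm_of_nodup_nodup_toFinset_eq
    · exact (List.nodup_finRange m).map π.injective
    · exact List.nodup_finRange m
    · ext x
      simp only [List.mem_toFinset, List.mem_map, List.mem_finRange, iff_true, true_iff,
        and_true]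
      exact ⟨π.symm x, by simp⟩
  have h3 : List.map (fun i : Fin m => (i : ℕ) + 1) (List.finRange m)
      = List.range' 1 m := by
    have : (fun i : Fin m => (i : ℕ) + 1) = (fun x => x + 1) ∘ (Fin.val) := rfl
    rw [this, ← List.map_map, (List.ext_getElem (by simp) (by simp) : List.map Fin.val (List.finRange m) = List.range m), List.range'_eq_map_range]
    apply List.map_congr_left
    intro x _
    omega
  rw [h1, ← h3]
  exact h2.map _

lemma mem_PW {m : ℕ} {w : List ℕ} : w ∈ PW m ↔ w.Perm (List.range' 1 m) := by
  constructor
  · rintro hw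
    rw [PW, Finset.mem_image] at hw
    obtain ⟨π, -, rfl⟩ := hw
    exact permWord_perm π
  · intro hperm
    have hlen : w.length = m := by
      simpa [List.length_range'] using hperm.length_eq
    have hnodup : w.Nodup := by
      rw [hperm.nodup_iff]
      exact List.nodup_range'
    have hmem : ∀ x ∈ w, 1 ≤ x ∧ x < 1 + m := by
      intro x hx
      have := hperm.mem_iff.1 hx
      rwa [List.mem_range'_1] at this
    set f : Fin m → Fin m := fun i =>
      ⟨w.getD (i : ℕ) 0 - 1, by
        have hi' : (i : ℕ) < w.length := by omega
        rw [List.getD_eq_getElem w 0 hi']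
        have := hmem (w[(i : ℕ)]) (List.getElem_mem hi')
        omega⟩ with hf
    have hinj : Function.Injective f := by
      intro i j hij
      have hi' : (i : ℕ) < w.length := by omega
      have hj' : (j : ℕ) < w.length := by omega
      have h1 : w.getD (i : ℕ) 0 - 1 = w.getD (j : ℕ) 0 - 1 := congrArg Fin.val hij
      rw [List.getD_eq_getElem w 0 hi', List.getD_eq_getElem w 0 hj'] at h1
      have hmi := hmem _ (List.getElem_mem hi')
      have hmj := hmem _ (List.getElem_mem hj')
      have h2 : w[(i : ℕ)] = w[(j : ℕ)] := by omega
      exact Fin.ext ((hnodup.getElem_inj_iff).1 h2)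
    let π : Equiv.Perm (Fin m) := Equiv.ofBijective f (Finite.injective_iff_bijective.1 hinj)
    rw [PW, Finset.mem_image]
    refine ⟨π, Finset.mem_univ _, ?_⟩
    unfold permWord
    have hπ : ∀ i : Fin m, (π i : ℕ) + 1 = w.getD (i : ℕ) 0 := by
      intro i
      have hi' : (i : ℕ) < w.length := by omega
      show (f i : ℕ) + 1 = _
      simp only [hf]
      rw [List.getD_eq_getElem w 0 hi']
      have := hmem _ (List.getElem_mem hi')
      omega
    calc List.ofFn (fun i => (π i : ℕ) + 1)
        = List.ofFn (fun i : Fin m => w.getD (i : ℕ) 0) := by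
          congr 1; funext i; exact hπ i
      _ = w := by
          apply List.ext_getElem
          · simp [hlen]
          · intro i h1 h2
            simp only [List.getElem_ofFn]
            rw [List.getD_eq_getElem w 0 h2]

/-! ### Consequences of `mem_PW`, and insertion -/

lemma PW_length {m : ℕ} {w : List ℕ} (hw : w ∈ PW m) : w.length = m := by
  have := (mem_PW.1 hw).length_eq
  simpa [List.length_range'] using this

lemma PW_nodup {m : ℕ} {w : List ℕ} (hw : w ∈ PW m) : w.Nodup := by
  rw [(mem_PW.1 hw).nodup_iff]
  exact List.nodup_range'

lemma PW_mem_iff {m : ℕ} {w : List ℕ} (hw : w ∈ PW m) :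
    ∀ x, x ∈ w ↔ 1 ≤ x ∧ x ≤ m := by
  intro x
  rw [(mem_PW.1 hw).mem_iff, List.mem_range'_1]
  omega

lemma PW_not_mem_succ {m : ℕ} {w : List ℕ} (hw : w ∈ PW m) : (m + 1) ∉ w := by
  intro h
  have := (PW_mem_iff hw _).1 h
  omega

lemma PW_mem_self {m : ℕ} {w : List ℕ} (hw : w ∈ PW m) (hm : 1 ≤ m) : m ∈ w :=
  (PW_mem_iff hw m).2 ⟨hm, le_refl m⟩

lemma restrict_eq_self {w : List ℕ} {c : ℕ} (h : ∀ x ∈ w, x ≤ c) :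
    restrict w c = w := by
  unfold restrict
  rw [List.filter_eq_self]
  intro x hx
  simpa using h x hx

lemma restrict_PW {m : ℕ} {w : List ℕ} (hw : w ∈ PW (m + 1)) :
    restrict w m ∈ PW m := by
  rw [mem_PW]
  have h1 : (restrict w m).Perm ((List.range' 1 (m + 1)).filter (fun x => x ≤ m)) :=
    (mem_PW.1 hw).filter _
  have h2 : (List.range' 1 (m + 1)).filter (fun x => decide (x ≤ m)) = List.range' 1 m := by
    rw [List.range'_1_concat, List.filter_append]
    have h3 : (List.range' 1 m).filter (fun x => decide (x ≤ m)) = List.range' 1 m := by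
      rw [List.filter_eq_self]
      intro x hx
      rw [List.mem_range'_1] at hx
      simp only [decide_eq_true_eq]
      omega
    have h4 : ([1 + m].filter (fun x => decide (x ≤ m))) = [] := by
      simp
    rw [h3, h4, List.append_nil]
  rwa [h2] at h1

/-- Insertion of `M` into `v` at position `j`. -/
def ins (v : List ℕ) (M j : ℕ) : List ℕ := v.take j ++ M :: v.drop j

lemma ins_PW {m : ℕ} {v : List ℕ} (hv : v ∈ PW m) {j : ℕ} :
    ins v (m + 1) j ∈ PW (m + 1) := by
  rw [mem_PW]
  calc (ins v (m + 1) j).Perm ((m + 1) :: (v.take j ++ v.drop j)) := List.perm_middle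
    _ = ((m + 1) :: v) := by rw [List.take_append_drop]
    _ ~ ((m + 1) :: List.range' 1 m) := (mem_PW.1 hv).cons _
    _ ~ (List.range' 1 m ++ [m + 1]) := (List.perm_append_singleton _ _).symm
    _ = List.range' 1 (m + 1) := by rw [List.range'_1_concat, Nat.add_comm]

lemma restrict_ins {m : ℕ} {v : List ℕ} (hv : v ∈ PW m) {j c : ℕ} (hc : c ≤ m) :
    restrict (ins v (m + 1) j) c = restrict v c := by
  unfold ins restrict
  have hd : (decide (m + 1 ≤ c)) = false := by simp; omega
  rw [List.filter_append, List.filter_cons, hd]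
  simp only [Bool.false_eq_true, if_false]
  rw [← List.filter_append, List.take_append_drop]

lemma ins_mem_le {m : ℕ} {v : List ℕ} (hv : v ∈ PW m) {j : ℕ} :
    ∀ x ∈ ins v (m + 1) j, x ≤ m + 1 := by
  intro x hx
  unfold ins at hx
  rcases List.mem_append.1 hx with h | h
  · have := (PW_mem_iff hv x).1 (List.mem_of_mem_take h); omega
  · rcases List.mem_cons.1 h with h | h
    · omega
    · have := (PW_mem_iff hv x).1 (List.mem_of_mem_drop h); omega

/-! ### Descent positions and the effect of insertion -/

noncomputable def dIdx (v : List ℕ) : Finset ℕ :=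
  (Finset.range (v.length - 1)).filter (fun i => v.getD (i + 1) 0 < v.getD i 0)

lemma mem_dIdx {v : List ℕ} {i : ℕ} :
    i ∈ dIdx v ↔ i < v.length - 1 ∧ v.getD (i + 1) 0 < v.getD i 0 := by
  simp [dIdx]

lemma card_dIdx (v : List ℕ) : (dIdx v).card = desList v := by
  rw [desList, List.countP_eq_length_filter]
  rfl

noncomputable def Skeep (v : List ℕ) : Finset ℕ :=
  insert v.length ((dIdx v).image (· + 1))

lemma mem_Skeep {v : List ℕ} {j : ℕ} :
    j ∈ Skeep v ↔ j = v.length ∨ (1 ≤ j ∧ j - 1 ∈ dIdx v) := by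
  unfold Skeep
  rw [Finset.mem_insert, Finset.mem_image]
  constructor
  · rintro (h | ⟨i, hi, rfl⟩)
    · left; exact h
    · right; exact ⟨by omega, by simpa using hi⟩
  · rintro (h | ⟨h1, h2⟩)
    · left; exact h
    · right; exact ⟨j - 1, h2, by omega⟩

lemma Skeep_subset (v : List ℕ) : Skeep v ⊆ Finset.range (v.length + 1) := by
  intro j hj
  rw [Finset.mem_range]
  rcases mem_Skeep.1 hj with h | ⟨h1, h2⟩
  · omega
  · have := mem_dIdx.1 h2
    omega

lemma card_Skeep (v : List ℕ) : (Skeep v).card = desList v + 1 := by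
  unfold Skeep
  rw [Finset.card_insert_of_notMem, Finset.card_image_of_injective _
    (fun a b h => by simpa using h), card_dIdx]
  intro hmem
  rw [Finset.mem_image] at hmem
  obtain ⟨i, hi, he⟩ := hmem
  have := mem_dIdx.1 hi
  omega

lemma des_ins (v : List ℕ) (M j : ℕ) (hM : ∀ y ∈ v, y < M) (hj : j ≤ v.length) :
    desList (ins v M j) = desList v + (if j ∈ Skeep v then 0 else 1) := by
  rcases eq_or_lt_of_le hj with rfl | hjlt
  · rw [if_pos (mem_Skeep.2 (Or.inl rfl))]
    unfold ins
    rw [List.take_length, List.drop_length]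
    have : v ++ [M] = v ++ M :: [] := rfl
    rw [← this, des_append_max v M hM]
    omega
  · have hb : v.drop j = v.getD j 0 :: v.drop (j + 1) := by
      rw [List.drop_eq_getElem_cons hjlt, List.getD_eq_getElem v 0 hjlt]
    have hbv : v.getD j 0 ∈ v := by
      rw [List.getD_eq_getElem v 0 hjlt]; exact List.getElem_mem _
    have hbM : v.getD j 0 < M := hM _ hbv
    have hMd : desList (M :: v.drop j) = 1 + desList (v.drop j) := by
      rw [hb, des_cons_cons, if_pos hbM]
    have h1 : desList (ins v M j) = desList (v.take j) + (1 + desList (v.drop j)) := by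
      unfold ins
      rw [des_append_cons, des_append_max _ M
        (fun y hy => hM y (List.mem_of_mem_take hy)), hMd]
    rcases Nat.eq_zero_or_pos j with rfl | hj1
    · have hnot : (0 : ℕ) ∉ Skeep v := by
        rw [mem_Skeep]
        rintro (h | ⟨h1, -⟩) <;> omega
      rw [if_neg hnot]
      simp only [List.take_zero, List.drop_zero, des_nil] at h1
      omega
    · have ha : v.take j = v.take (j - 1) ++ [v.getD (j - 1) 0] := by
        conv_lhs => rw [show j = (j - 1) + 1 by omega]
        rw [List.take_succ]
        congr 1
        have hj1' : j - 1 < v.length := by omega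
        rw [List.getElem?_eq_getElem hj1', List.getD_eq_getElem v 0 hj1']
        rfl
      have hveq : v = v.take (j - 1) ++ v.getD (j - 1) 0 :: v.drop j := by
        conv_lhs => rw [← List.take_append_drop j v]
        rw [ha, List.append_assoc]
        rfl
      have h2 : desList v = desList (v.take j) +
          ((if v.getD j 0 < v.getD (j - 1) 0 then 1 else 0) + desList (v.drop j)) := by
        conv_lhs => rw [hveq]
        rw [des_append_cons, ← ha]
        congr 1
        rw [hb, des_cons_cons]
      by_cases hd : v.getD j 0 < v.getD (j - 1) 0
      · have hmem : j ∈ Skeep v := by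
          rw [mem_Skeep]
          right
          refine ⟨hj1, mem_dIdx.2 ⟨by omega, ?_⟩⟩
          rw [show j - 1 + 1 = j by omega]
          exact hd
        rw [if_pos hmem, if_pos hd] at *
        omega
      · have hmem : j ∉ Skeep v := by
          rw [mem_Skeep]
          rintro (h | ⟨h1, h2⟩)
          · omega
          · obtain ⟨h3, h4⟩ := mem_dIdx.1 h2
            rw [show j - 1 + 1 = j by omega] at h4
            exact hd h4
        rw [if_neg hmem, if_neg hd] at *
        omega

lemma hasSucc_ins_iff {m : ℕ} {v : List ℕ} (hv : v ∈ PW m) (hm : 1 ≤ m)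
    (hns : ¬ hasSuccession v) {j : ℕ} (hj : j ≤ v.length) :
    hasSuccession (ins v (m + 1) j) ↔ j = v.idxOf m + 1 := by
  have hM : ∀ y ∈ v.take j ++ v.drop j, y < m + 1 := by
    rw [List.take_append_drop]
    intro y hy
    have := (PW_mem_iff hv y).1 hy
    omega
  have hv' : ¬ hasSuccession (v.take j ++ v.drop j) := by
    rw [List.take_append_drop]; exact hns
  rw [ins, hasSucc_insert_iff _ _ _ hM hv']
  simp only [Nat.add_sub_cancel]
  have hlen : v.length = m := PW_length hv
  have hmv : m ∈ v := PW_mem_self hv hm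
  have hidx : v.idxOf m < v.length := List.idxOf_lt_length_iff.2 hmv
  have hgetidx : v[v.idxOf m]'(hidx) = m := List.getElem_idxOf hidx
  have hnodup : v.Nodup := PW_nodup hv
  constructor
  · intro h
    rcases Nat.eq_zero_or_pos j with rfl | hj1
    · simp at h
    · rw [List.getLast?_eq_getElem?] at h
      have hlt : (v.take j).length = j := by rw [List.length_take]; omega
      rw [hlt, List.getElem?_take, if_pos (by omega : j - 1 < j)] at h
      have hj1' : j - 1 < v.length := by omega
      rw [List.getElem?_eq_getElem hj1'] at h
      have h2 : v[j - 1]'hj1' = m := by simpa using h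
      have h3 : v[j - 1]'hj1' = v[v.idxOf m]'hidx := by rw [h2, hgetidx]
      have := (hnodup.getElem_inj_iff).1 h3
      omega
  · rintro rfl
    have hj1' : v.idxOf m < v.length := hidx
    rw [List.getLast?_eq_getElem?]
    have hlt : (v.take (v.idxOf m + 1)).length = v.idxOf m + 1 := by
      rw [List.length_take]; omega
    rw [hlt, Nat.add_sub_cancel, List.getElem?_take, if_pos (by omega),
      List.getElem?_eq_getElem hj1', hgetidx]

lemma restrict_restrict (w : List ℕ) (m c : ℕ) :
    restrict (restrict w m) c = restrict w (min c m) := by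
  unfold restrict
  rw [List.filter_filter]
  apply List.filter_congr
  intro x _
  have : (x ≤ c ∧ x ≤ m) ↔ x ≤ min c m := by omega
  rw [← Bool.decide_and, decide_eq_decide.2 this]

lemma noSucc_restrict {w : List ℕ} (h : NoSucc w) (m : ℕ) : NoSucc (restrict w m) := by
  intro c
  rw [restrict_restrict]
  exact h _

lemma noSucc_self {m : ℕ} {v : List ℕ} (hv : v ∈ PW m) (hns : NoSucc v) :
    ¬ hasSuccession v := by
  have := hns m
  rwa [restrict_eq_self (fun x hx => ((PW_mem_iff hv x).1 hx).2)] at this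

lemma noSucc_ins_iff {m : ℕ} {v : List ℕ} (hv : v ∈ PW m) (hns : NoSucc v) {j : ℕ} :
    NoSucc (ins v (m + 1) j) ↔ ¬ hasSuccession (ins v (m + 1) j) := by
  constructor
  · intro h
    have := h (m + 1)
    rwa [restrict_eq_self (ins_mem_le hv)] at this
  · intro h c
    rcases le_or_gt c m with hc | hc
    · rw [restrict_ins hv hc]
      exact hns c
    · rw [restrict_eq_self (fun x hx => le_trans (ins_mem_le hv x hx) hc)]
      exact h

/-! ### The sets `A m k` and the fiber counting -/

noncomputable def A (m k : ℕ) : Finset (List ℕ) :=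
  (PW m).filter (fun w => NoSucc w ∧ desList w = k)

lemma mem_A {m k : ℕ} {w : List ℕ} :
    w ∈ A m k ↔ w ∈ PW m ∧ NoSucc w ∧ desList w = k := by
  simp [A, Finset.mem_filter]

noncomputable def goodPos (v : List ℕ) (m k : ℕ) : Finset ℕ :=
  (Finset.range (v.length + 1)).filter
    (fun j => NoSucc (ins v (m + 1) j) ∧ desList (ins v (m + 1) j) = k)

lemma j0_mem_Skeep {m : ℕ} {v : List ℕ} (hv : v ∈ PW m) (hm : 1 ≤ m) :
    v.idxOf m + 1 ∈ Skeep v := by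
  have hmv := PW_mem_self hv hm
  have hidx : v.idxOf m < v.length := List.idxOf_lt_length_iff.2 hmv
  have hget : v[v.idxOf m]'hidx = m := List.getElem_idxOf hidx
  rw [mem_Skeep]
  rcases eq_or_lt_of_le (Nat.succ_le_of_lt hidx) with h | h
  · left; omega
  · right
    refine ⟨by omega, mem_dIdx.2 ⟨by omega, ?_⟩⟩
    simp only [Nat.add_sub_cancel]
    have hi1 : v.idxOf m + 1 < v.length := h
    rw [List.getD_eq_getElem v 0 hi1, List.getD_eq_getElem v 0 hidx, hget]
    have hmem := (PW_mem_iff hv _).1 (List.getElem_mem hi1)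
    have hne : v[v.idxOf m + 1]'hi1 ≠ m := by
      intro he
      have h2 : v[v.idxOf m + 1]'hi1 = v[v.idxOf m]'hidx := by rw [he, hget]
      have := ((PW_nodup hv).getElem_inj_iff).1 h2
      omega
    omega

lemma card_goodPos_eq {m k : ℕ} {v : List ℕ} (hv : v ∈ PW m) (hns : NoSucc v)
    (hm : 1 ≤ m) (hd : desList v = k) : (goodPos v m k).card = k := by
  have hj0 := j0_mem_Skeep hv hm
  have hM : ∀ y ∈ v, y < m + 1 := fun y hy => by
    have := (PW_mem_iff hv y).1 hy; omega
  have hEq : goodPos v m k = (Skeep v).erase (v.idxOf m + 1) := by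
    ext j
    rw [goodPos, Finset.mem_filter, Finset.mem_range, Finset.mem_erase]
    constructor
    · rintro ⟨hjr, hnos, hdes⟩
      have hjle : j ≤ v.length := by omega
      have hnsi : ¬ hasSuccession (ins v (m + 1) j) := (noSucc_ins_iff hv hns).1 hnos
      have hne : j ≠ v.idxOf m + 1 := fun he =>
        hnsi ((hasSucc_ins_iff hv hm (noSucc_self hv hns) hjle).2 he)
      refine ⟨hne, ?_⟩
      have hdi := des_ins v (m + 1) j hM hjle
      by_cases hmem : j ∈ Skeep v
      · exact hmem
      · rw [if_neg hmem, hdes] at hdi; omega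
    · rintro ⟨hne, hmem⟩
      have hjr : j < v.length + 1 := Finset.mem_range.1 (Skeep_subset v hmem)
      have hjle : j ≤ v.length := by omega
      have hdes : desList (ins v (m + 1) j) = k := by
        have hdi := des_ins v (m + 1) j hM hjle
        rw [if_pos hmem] at hdi; omega
      have hnos : NoSucc (ins v (m + 1) j) := by
        rw [noSucc_ins_iff hv hns, hasSucc_ins_iff hv hm (noSucc_self hv hns) hjle]
        exact hne
      exact ⟨hjr, hnos, hdes⟩
  rw [hEq, Finset.card_erase_of_mem hj0, card_Skeep]
  omega

lemma card_goodPos_succ {m k : ℕ} {v : List ℕ} (hv : v ∈ PW m) (hns : NoSucc v)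
    (hm : 1 ≤ m) (hd : desList v + 1 = k) :
    (goodPos v m k).card = v.length - desList v := by
  have hj0 := j0_mem_Skeep hv hm
  have hM : ∀ y ∈ v, y < m + 1 := fun y hy => by
    have := (PW_mem_iff hv y).1 hy; omega
  have hEq : goodPos v m k = Finset.range (v.length + 1) \ Skeep v := by
    ext j
    rw [goodPos, Finset.mem_filter, Finset.mem_range, Finset.mem_sdiff, Finset.mem_range]
    constructor
    · rintro ⟨hjr, hnos, hdes⟩
      have hjle : j ≤ v.length := by omega
      have hdi := des_ins v (m + 1) j hM hjle
      refine ⟨hjr, fun hmem => ?_⟩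
      rw [if_pos hmem, hdes] at hdi
      omega
    · rintro ⟨hjr, hmem⟩
      have hjle : j ≤ v.length := by omega
      have hdi := des_ins v (m + 1) j hM hjle
      rw [if_neg hmem] at hdi
      have hne : j ≠ v.idxOf m + 1 := fun he => hmem (he ▸ hj0)
      refine ⟨hjr, ?_, by omega⟩
      rw [noSucc_ins_iff hv hns, hasSucc_ins_iff hv hm (noSucc_self hv hns) hjle]
      exact hne
  rw [hEq, Finset.card_sdiff_of_subset (Skeep_subset v), card_Skeep, Finset.card_range]
  omega

lemma ins_restrict_eq {m : ℕ} {w : List ℕ} (hw : w ∈ PW (m + 1)) :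
    ∃ j ≤ (restrict w m).length, w = ins (restrict w m) (m + 1) j := by
  have hmem : (m + 1) ∈ w := (PW_mem_iff hw _).2 ⟨by omega, le_refl _⟩
  set j := w.idxOf (m + 1) with hjdef
  have hjlt : j < w.length := List.idxOf_lt_length_iff.2 hmem
  have hget : w[j]'hjlt = m + 1 := List.getElem_idxOf hjlt
  have hsplit : w = w.take j ++ (m + 1) :: w.drop (j + 1) := by
    conv_lhs => rw [← List.take_append_drop j w]
    rw [List.drop_eq_getElem_cons hjlt, hget]
  have hnotmem : (m + 1) ∉ w.take j ++ w.drop (j + 1) := by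
    have h2 : w.Nodup := PW_nodup hw
    rw [hsplit] at h2
    have h3 := (List.perm_middle.nodup_iff).1 h2
    exact (List.nodup_cons.1 h3).1
  have hle : ∀ x ∈ w.take j ++ w.drop (j + 1), x ≤ m := by
    intro x hx
    have hxw : x ∈ w := by
      rw [hsplit]
      rcases List.mem_append.1 hx with h | h
      · exact List.mem_append.2 (Or.inl h)
      · exact List.mem_append.2 (Or.inr (List.mem_cons_of_mem _ h))
    have h1 := (PW_mem_iff hw x).1 hxw
    have hne : x ≠ m + 1 := fun he => hnotmem (he ▸ hx)
    omega
  have hrw : restrict w m = w.take j ++ w.drop (j + 1) := by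
    calc restrict w m = restrict (w.take j ++ (m + 1) :: w.drop (j + 1)) m := by
          rw [← hsplit]
      _ = restrict (w.take j) m ++ restrict (w.drop (j + 1)) m := by
          unfold restrict
          rw [List.filter_append, List.filter_cons]
          have hd : (decide (m + 1 ≤ m)) = false := by simp
          rw [hd]
          simp only [Bool.false_eq_true, if_false]
      _ = w.take j ++ w.drop (j + 1) := by
          rw [restrict_eq_self (fun x hx => hle x (List.mem_append.2 (Or.inl hx))),
            restrict_eq_self (fun x hx => hle x (List.mem_append.2 (Or.inr hx)))]
  refine ⟨j, ?_, ?_⟩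
  · rw [hrw, List.length_append, List.length_take]
    omega
  · rw [hrw, ins,
      List.take_left' (by rw [List.length_take]; omega),
      List.drop_left' (by rw [List.length_take]; omega)]
    exact hsplit

lemma indexOf_ins {v : List ℕ} {M j : ℕ} (hM : M ∉ v) (hj : j ≤ v.length) :
    (ins v M j).idxOf M = j := by
  rw [ins, List.idxOf_append_of_notMem (fun h => hM (List.mem_of_mem_take h)),
    List.idxOf_cons_self, List.length_take]
  omega

lemma fiber_eq {m k : ℕ} {v : List ℕ} (hv : v ∈ PW m) (hns : NoSucc v) :
    (A (m + 1) k).filter (fun w => restrict w m = v)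
      = (goodPos v m k).image (fun j => ins v (m + 1) j) := by
  ext w
  rw [Finset.mem_filter, Finset.mem_image]
  constructor
  · rintro ⟨hw, hrw⟩
    obtain ⟨hwP, hwN, hwD⟩ := mem_A.1 hw
    obtain ⟨j, hj, hwe⟩ := ins_restrict_eq hwP
    rw [hrw] at hj hwe
    refine ⟨j, ?_, hwe.symm⟩
    rw [goodPos, Finset.mem_filter, Finset.mem_range]
    exact ⟨by omega, by rw [← hwe]; exact hwN, by rw [← hwe]; exact hwD⟩
  · rintro ⟨j, hj, rfl⟩
    rw [goodPos, Finset.mem_filter, Finset.mem_range] at hj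
    obtain ⟨hjr, hnos, hdes⟩ := hj
    have hres : restrict (ins v (m + 1) j) m = v := by
      rw [restrict_ins hv (le_refl m),
        restrict_eq_self (fun x hx => ((PW_mem_iff hv x).1 hx).2)]
    exact ⟨mem_A.2 ⟨ins_PW hv, hnos, hdes⟩, hres⟩

lemma card_fiber {m k : ℕ} {v : List ℕ} (hv : v ∈ PW m) (hns : NoSucc v) :
    ((A (m + 1) k).filter (fun w => restrict w m = v)).card = (goodPos v m k).card := by
  rw [fiber_eq hv hns]
  apply Finset.card_image_of_injOn
  intro j1 h1 j2 h2 he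
  rw [Finset.mem_coe, goodPos, Finset.mem_filter, Finset.mem_range] at h1 h2
  have hM : (m + 1) ∉ v := PW_not_mem_succ hv
  have e1 : (ins v (m + 1) j1).idxOf (m + 1) = j1 := indexOf_ins hM (by omega)
  have e2 : (ins v (m + 1) j2).idxOf (m + 1) = j2 := indexOf_ins hM (by omega)
  simp only [] at he
  rw [← e1, ← e2, he]

lemma A_card_rec (m k : ℕ) (hm : 1 ≤ m) (hk : 1 ≤ k) :
    (A (m + 1) k).card = k * (A m k).card + (m + 1 - k) * (A m (k - 1)).card := by
  have hmaps : ∀ w ∈ A (m + 1) k, restrict w m ∈ A m k ∪ A m (k - 1) := by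
    intro w hw
    obtain ⟨hwP, hwN, hwD⟩ := mem_A.1 hw
    have hvP : restrict w m ∈ PW m := restrict_PW hwP
    have hvN : NoSucc (restrict w m) := noSucc_restrict hwN m
    obtain ⟨j, hj, hwe⟩ := ins_restrict_eq hwP
    have hdes := des_ins (restrict w m) (m + 1) j
      (fun y hy => by have := (PW_mem_iff hvP y).1 hy; omega) hj
    rw [← hwe, hwD] at hdes
    rw [Finset.mem_union, mem_A, mem_A]
    by_cases hc : j ∈ Skeep (restrict w m)
    · rw [if_pos hc] at hdes; left; exact ⟨hvP, hvN, by omega⟩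
    · rw [if_neg hc] at hdes; right; exact ⟨hvP, hvN, by omega⟩
  rw [Finset.card_eq_sum_card_fiberwise hmaps]
  have hdisj : Disjoint (A m k) (A m (k - 1)) := by
    rw [Finset.disjoint_left]
    intro w h1 h2
    have hd1 := (mem_A.1 h1).2.2
    have hd2 := (mem_A.1 h2).2.2
    omega
  rw [Finset.sum_union hdisj]
  have h1 : ∀ v ∈ A m k, ((A (m + 1) k).filter (fun w => restrict w m = v)).card = k := by
    intro v hv
    obtain ⟨hvP, hvN, hvD⟩ := mem_A.1 hv
    rw [card_fiber hvP hvN, card_goodPos_eq hvP hvN hm hvD]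
  have h2 : ∀ v ∈ A m (k - 1),
      ((A (m + 1) k).filter (fun w => restrict w m = v)).card = m + 1 - k := by
    intro v hv
    obtain ⟨hvP, hvN, hvD⟩ := mem_A.1 hv
    rw [card_fiber hvP hvN, card_goodPos_succ hvP hvN hm (by omega), PW_length hvP, hvD]
    omega
  rw [Finset.sum_congr rfl h1, Finset.sum_congr rfl h2, Finset.sum_const, Finset.sum_const,
    smul_eq_mul, smul_eq_mul]
  ring

/-! ### Bridge to permutations, and base cases -/

lemma a_eq (n k : ℕ) :
    {π : Equiv.Perm (Fin (n + 1)) | InAS π ∧ desList (permWord π) = k}.ncard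
      = (A (n + 1) k).card := by
  have h1 : {π : Equiv.Perm (Fin (n + 1)) | InAS π ∧ desList (permWord π) = k}
      = ↑((Finset.univ : Finset (Equiv.Perm (Fin (n + 1)))).filter
          (fun π => NoSucc (permWord π) ∧ desList (permWord π) = k)) := by
    ext π
    simp only [Set.mem_setOf_eq, Finset.coe_filter, Finset.mem_univ, true_and]
    exact Iff.rfl
  rw [h1, Set.ncard_coe_finset]
  have h2 : A (n + 1) k = Finset.image permWord
      ((Finset.univ : Finset (Equiv.Perm (Fin (n + 1)))).filter
        (fun π => NoSucc (permWord π) ∧ desList (permWord π) = k)) := by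
    rw [A, PW, Finset.filter_image]
  rw [h2, Finset.card_image_of_injective _ permWord_injective]

lemma A_empty {m k : ℕ} (hmk : m ≤ k) (hk : 1 ≤ k) : A m k = ∅ := by
  rw [Finset.eq_empty_iff_forall_notMem]
  intro w hw
  obtain ⟨hwP, -, hwD⟩ := mem_A.1 hw
  have h1 := des_le w
  have h2 := PW_length hwP
  omega

lemma A_two_one : A 2 1 = {[2, 1]} := by
  ext w
  rw [mem_A, Finset.mem_singleton]
  constructor
  · rintro ⟨hwP, hwN, hwD⟩
    have hperm : w.Perm [1, 2] := by
      have h := mem_PW.1 hwP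
      have : List.range' 1 2 = [1, 2] := rfl
      rwa [this] at h
    have hlen : w.length = 2 := by simpa using hperm.length_eq
    obtain ⟨x, y, hxy⟩ : ∃ x y, w = [x, y] := by
      match w, hlen with
      | [x, y], _ => exact ⟨x, y, rfl⟩
    subst hxy
    have hx : x = 1 ∨ x = 2 := by
      have := hperm.subset (show x ∈ [x, y] by simp)
      simpa using this
    have hy : y = 1 ∨ y = 2 := by
      have := hperm.subset (show y ∈ [x, y] by simp)
      simpa using this
    have hnd : x ≠ y := by
      have h2 : ([x, y] : List ℕ).Nodup := hperm.nodup_iff.2 (by decide)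
      simpa using h2
    rcases hx with rfl | rfl <;> rcases hy with rfl | rfl
    · exact absurd rfl hnd
    · exfalso
      rw [des_cons_cons] at hwD
      simp [des_single] at hwD
    · rfl
    · exact absurd rfl hnd
  · rintro rfl
    refine ⟨?_, ?_, ?_⟩
    · rw [mem_PW]
      show ([2, 1] : List ℕ).Perm [1, 2]
      exact List.Perm.swap 1 2 []
    · intro c
      match c with
      | 0 =>
        have : restrict [2, 1] 0 = [] := rfl
        rw [this]; exact not_hasSucc_nil
      | 1 =>
        have : restrict [2, 1] 1 = [1] := rfl
        rw [this]; exact not_hasSucc_single 1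
      | (c + 2) =>
        have : restrict [2, 1] (c + 2) = [2, 1] := by
          apply restrict_eq_self
          intro x hx
          rcases List.mem_cons.1 hx with rfl | hx
          · omega
          · rcases List.mem_cons.1 hx with rfl | hx
            · omega
            · simp at hx
        rw [this, hasSucc_cons_cons]
        rintro (h | h)
        · omega
        · exact not_hasSucc_single 1 h
    · rw [des_cons_cons]
      simp [des_single]

end Stmt7Aux

theorem stmt7 (a : ℕ → ℕ → ℕ)
    (ha : ∀ n k : ℕ, a n k =
      {π : Equiv.Perm (Fin (n + 1)) | InAS π ∧ desList (permWord π) = k}.ncard) :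
    (∀ n k : ℕ, 1 ≤ n → 1 ≤ k →
      (a (n + 1) k : ℤ) = k * a n k + ((n : ℤ) - k + 2) * a n (k - 1)) ∧
    a 1 1 = 1 ∧ (∀ k : ℕ, 2 ≤ k → a 1 k = 0) := by
  have hbridge : ∀ n k : ℕ, a n k = (Stmt7Aux.A (n + 1) k).card := fun n k => by
    rw [ha n k, Stmt7Aux.a_eq]
  refine ⟨?_, ?_, ?_⟩
  · intro n k hn hk
    rw [hbridge (n + 1) k, hbridge n k, hbridge n (k - 1)]
    rcases le_or_gt k (n + 2) with hle | hlt
    · have hrec := Stmt7Aux.A_card_rec (n + 1) k (by omega) hk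
      rw [show n + 1 + 1 = n + 2 from rfl] at hrec
      rw [hrec]
      push_cast [Nat.cast_sub (show k ≤ n + 1 + 1 by omega)]
      ring
    · have e1 : Stmt7Aux.A (n + 1 + 1) k = ∅ := Stmt7Aux.A_empty (by omega) (by omega)
      have e2 : Stmt7Aux.A (n + 1) k = ∅ := Stmt7Aux.A_empty (by omega) (by omega)
      have e3 : Stmt7Aux.A (n + 1) (k - 1) = ∅ := Stmt7Aux.A_empty (by omega) (by omega)
      rw [e1, e2, e3]
      simp
  · rw [hbridge 1 1, Stmt7Aux.A_two_one, Finset.card_singleton]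
  · intro k hk
    rw [hbridge 1 k, Stmt7Aux.A_empty (by omega) (by omega), Finset.card_empty]
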